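/- Then the polynomial P_n(x) = Σ_{j=0}^{n} ((n+ν)!/(j+ν)!) a_j x^j is a monic polynomial of degree n, and ∫₀^∞ P_n(x) Q_k(x) dx = 0 for every k = 0,…,n−1. -/

import Mathlib

open MeasureTheory Set

-- change of variables helpers
lemma cov_iff {t : ℝ} (ht : 0 < t) (g : ℝ → ℝ) :
    IntegrableOn g (Ioi 0) ↔ IntegrableOn (fun u => g (t * u)) (Ioi 0) := by
  simpa [mul_zero] using (integrableOn_Ioi_comp_mul_left_iff g 0 ht).symm

lemma cov_eq {t : ℝ} (ht : 0 < t) (g : ℝ → ℝ) :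
    ∫ x in Ioi (0:ℝ), g x = t * ∫ u in Ioi (0:ℝ), g (t * u) := by
  rw [integral_comp_mul_left_Ioi g 0 ht, mul_zero, smul_eq_mul, ← mul_assoc,
    mul_inv_cancel₀ ht.ne', one_mul]

lemma aux_gamma_int' (m : ℕ) : IntegrableOn (fun t : ℝ => t ^ m * Real.exp (-t)) (Ioi 0) := by
  have h := Real.GammaIntegral_convergent (s := (m : ℝ) + 1) (by positivity)
  refine h.congr_fun ?_ measurableSet_Ioi
  intro t ht
  show Real.exp (-t) * t ^ ((m:ℝ) + 1 - 1) = t ^ m * Real.exp (-t)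
  rw [add_sub_cancel_right, Real.rpow_natCast, mul_comm]

lemma aux_gamma_val' (m : ℕ) :
    ∫ t in Ioi (0:ℝ), t ^ m * Real.exp (-t) = (Nat.factorial m : ℝ) := by
  rw [← Real.Gamma_nat_eq_factorial,
    Real.Gamma_eq_integral (by positivity : (0:ℝ) < (m:ℝ) + 1)]
  refine setIntegral_congr_fun measurableSet_Ioi fun t ht => ?_
  show t ^ m * Real.exp (-t) = Real.exp (-t) * t ^ ((m:ℝ) + 1 - 1)
  rw [add_sub_cancel_right, Real.rpow_natCast, mul_comm]

lemma aux_main (n ν : ℕ) (q : ℝ → ℝ) (hqm : Measurable q)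
    (hqint : ∀ j ≤ n, IntegrableOn (fun x => x ^ j * |q x|) (Ioi 0))
    (c a : ℕ → ℝ) (Pn : ℝ → ℝ)
    (hPn : ∀ x : ℝ, Pn x = ∑ j ∈ Finset.range (n + 1), c j * a j * x ^ j)
    (Qf : ℝ → ℝ)
    (hQ : ∀ y ∈ Ioi (0:ℝ),
      Qf y = ∫ t in Ioi (0:ℝ), t ^ ν * Real.exp (-t) * q (y / t) / t) :
    IntegrableOn (fun x => Pn x * Qf x) (Ioi 0) ∧
    ∫ x in Ioi (0:ℝ), Pn x * Qf x
      = ∑ j ∈ Finset.range (n + 1),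
          (c j * a j * (Nat.factorial (ν + j) : ℝ)) * ∫ u in Ioi (0:ℝ), u ^ j * q u := by
  have hPn' : Pn = fun x => ∑ j ∈ Finset.range (n + 1), c j * a j * x ^ j := funext hPn
  set μ : Measure ℝ := volume.restrict (Ioi 0) with hμ
  set F : ℝ → ℝ → ℝ := fun t x => Pn x * (t ^ ν * Real.exp (-t) * q (x / t) / t) with hF
  -- measurability
  have hPnm : Measurable Pn := by
    rw [hPn']
    exact Finset.measurable_sum _ fun j _ => (measurable_id.pow_const j).const_mul _
  have hHm : Measurable (Function.uncurry F) := by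
    apply Measurable.mul (hPnm.comp measurable_snd)
    exact ((((measurable_fst.pow_const ν).mul
      (Real.measurable_exp.comp measurable_fst.neg)).mul
      (hqm.comp (measurable_snd.div measurable_fst))).div measurable_fst)
  -- integrability of |q| pieces under scaling
  have habs : ∀ j ≤ n, ∀ t : ℝ, 0 < t →
      IntegrableOn (fun x => x ^ j * |q (x / t)|) (Ioi 0) := by
    intro j hj t ht
    rw [cov_iff ht]
    have he : (fun u => (t * u) ^ j * |q (t * u / t)|)
        = fun u => t ^ j * (u ^ j * |q u|) := by
      funext u; rw [mul_div_cancel_left₀ _ ht.ne', mul_pow]; ring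
    rw [he]
    exact ((hqint j hj).const_mul _)
  have habs_val : ∀ j ≤ n, ∀ t : ℝ, 0 < t →
      ∫ x in Ioi (0:ℝ), x ^ j * |q (x / t)|
        = t ^ (j+1) * ∫ u in Ioi (0:ℝ), u ^ j * |q u| := by
    intro j hj t ht
    rw [cov_eq ht (fun x => x ^ j * |q (x / t)|)]
    have he : ∀ u : ℝ, (t * u) ^ j * |q (t * u / t)| = t ^ j * (u ^ j * |q u|) := by
      intro u; rw [mul_div_cancel_left₀ _ ht.ne', mul_pow]; ring
    simp_rw [he, integral_const_mul]
    ring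
  have hq' : ∀ j ≤ n, IntegrableOn (fun u => u ^ j * q u) (Ioi 0) := by
    intro j hj
    refine (hqint j hj).mono' ?_ ?_
    · exact ((measurable_id.pow_const j).mul hqm).aestronglyMeasurable
    · filter_upwards [ae_restrict_mem measurableSet_Ioi] with x hx
      rw [Real.norm_eq_abs, abs_mul, abs_pow, abs_of_pos hx]
  have hsc : ∀ j ≤ n, ∀ t : ℝ, 0 < t →
      IntegrableOn (fun x => x ^ j * q (x / t)) (Ioi 0) := by
    intro j hj t ht
    rw [cov_iff ht]
    have he : (fun u => (t * u) ^ j * q (t * u / t))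
        = fun u => t ^ j * (u ^ j * q u) := by
      funext u; rw [mul_div_cancel_left₀ _ ht.ne', mul_pow]; ring
    rw [he]
    exact ((hq' j hj).const_mul _)
  set M : ℕ → ℝ := fun j => ∫ u in Ioi (0:ℝ), u ^ j * |q u| with hM
  set m : ℕ → ℝ := fun j => ∫ u in Ioi (0:ℝ), u ^ j * q u with hm
  set d : ℕ → ℝ → ℝ := fun j t => |c j * a j| * (t ^ ν * Real.exp (-t) / t) with hd
  set G : ℝ → ℝ → ℝ :=
    fun t x => ∑ j ∈ Finset.range (n+1), d j t * (x ^ j * |q (x / t)|) with hG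
  set B : ℝ → ℝ :=
    fun t => ∑ j ∈ Finset.range (n+1),
      (|c j * a j| * M j) * (t ^ (ν + j) * Real.exp (-t)) with hB
  have hrange : ∀ j ∈ Finset.range (n+1), j ≤ n :=
    fun j hj => Nat.lt_succ_iff.mp (Finset.mem_range.mp hj)
  -- step 2 : slices are integrable
  have hFt : ∀ t ∈ Ioi (0:ℝ), Integrable (fun x => F t x) μ := by
    intro t ht
    have h1 : (fun x => F t x)
        = fun x => (t ^ ν * Real.exp (-t) / t) * (Pn x * q (x / t)) := by
      funext x; simp only [hF]; ring
    rw [h1]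
    refine Integrable.const_mul ?_ _
    have h2 : (fun x => Pn x * q (x / t))
        = fun x => ∑ j ∈ Finset.range (n+1), (c j * a j) * (x ^ j * q (x / t)) := by
      funext x; rw [hPn x, Finset.sum_mul]
      exact Finset.sum_congr rfl fun j _ => by ring
    rw [hμ, h2]
    exact integrable_finset_sum _ fun j hj => ((hsc j (hrange j hj) t ht).const_mul _)
  -- G is integrable with computable integral
  have hGint : ∀ t ∈ Ioi (0:ℝ), Integrable (G t) μ := by
    intro t ht
    rw [hμ]
    exact integrable_finset_sum _ fun j hj => ((habs j (hrange j hj) t ht).const_mul _)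
  have hGval : ∀ t ∈ Ioi (0:ℝ), ∫ x, G t x ∂μ = B t := by
    intro t ht
    have h1 : ∫ x, G t x ∂μ
        = ∑ j ∈ Finset.range (n+1), ∫ x, d j t * (x ^ j * |q (x / t)|) ∂μ := by
      rw [hμ]
      exact integral_finset_sum _ fun j hj => ((habs j (hrange j hj) t ht).const_mul _)
    rw [h1, hB]
    refine Finset.sum_congr rfl fun j hj => ?_
    rw [integral_const_mul, hμ, habs_val j (hrange j hj) t ht, hd]
    have htne : t ≠ 0 := ht.ne'
    rw [pow_add, pow_succ]
    field_simp
    ring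
  -- pointwise bound
  have hbound : ∀ t ∈ Ioi (0:ℝ), ∀ x ∈ Ioi (0:ℝ), ‖F t x‖ ≤ G t x := by
    intro t ht x hx
    have e1 : ‖F t x‖ = |Pn x| * (t ^ ν * Real.exp (-t) / t * |q (x / t)|) := by
      rw [Real.norm_eq_abs]
      simp only [hF]
      rw [abs_mul, abs_div, abs_mul, abs_mul, abs_of_pos (a := t) ht,
        abs_of_nonneg (a := t ^ ν) (pow_nonneg ht.le ν), abs_of_nonneg (a := Real.exp (-t)) (Real.exp_nonneg _)]
      ring
    have e2 : |Pn x| ≤ ∑ j ∈ Finset.range (n+1), |c j * a j| * x ^ j := by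
      rw [hPn x]
      refine (Finset.abs_sum_le_sum_abs _ _).trans
        (le_of_eq (Finset.sum_congr rfl fun j _ => ?_))
      rw [abs_mul, abs_pow, abs_of_pos (a := x) hx]
    rw [e1]
    have ht' : (0:ℝ) < t := ht
    calc |Pn x| * (t ^ ν * Real.exp (-t) / t * |q (x / t)|)
        ≤ (∑ j ∈ Finset.range (n+1), |c j * a j| * x ^ j)
            * (t ^ ν * Real.exp (-t) / t * |q (x / t)|) :=
          mul_le_mul_of_nonneg_right e2 (by positivity)
      _ = G t x := by
          rw [hG, Finset.sum_mul]
          exact Finset.sum_congr rfl fun j _ => by rw [hd]; ring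
  -- B is integrable
  have hBint : Integrable B μ := by
    rw [hB, hμ]
    exact integrable_finset_sum _ fun j _ => ((aux_gamma_int' (ν + j)).const_mul _)
  -- step 3 : t ↦ ∫ ‖F t x‖ dx is integrable
  have hnorm : Integrable (fun t => ∫ x, ‖F t x‖ ∂μ) μ := by
    refine hBint.mono' ?_ ?_
    · exact hHm.norm.aestronglyMeasurable.integral_prod_right'
    · filter_upwards [ae_restrict_mem measurableSet_Ioi] with t ht
      have h0 : (0:ℝ) ≤ ∫ x, ‖F t x‖ ∂μ := integral_nonneg fun x => norm_nonneg _
      rw [Real.norm_eq_abs, abs_of_nonneg h0]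
      calc ∫ x, ‖F t x‖ ∂μ ≤ ∫ x, G t x ∂μ := by
            refine integral_mono_of_nonneg
              (Filter.Eventually.of_forall fun x => norm_nonneg _) (hGint t ht) ?_
            filter_upwards [ae_restrict_mem measurableSet_Ioi] with x hx
              using hbound t ht x hx
        _ = B t := hGval t ht
  -- step 4 : Fubini integrability
  have hHint : Integrable (Function.uncurry F) (μ.prod μ) := by
    refine (integrable_prod_iff hHm.aestronglyMeasurable).mpr ⟨?_, hnorm⟩
    filter_upwards [ae_restrict_mem measurableSet_Ioi] with t ht using hFt t ht
  -- step 5 : integrability of the target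
  have heq : ∀ᵐ x ∂μ, (∫ t, F t x ∂μ) = Pn x * Qf x := by
    filter_upwards [ae_restrict_mem measurableSet_Ioi] with x hx
    rw [hQ x hx]
    exact integral_const_mul _ _
  have h5 : Integrable (fun x => ∫ t, F t x ∂μ) μ := hHint.integral_prod_right
  constructor
  · rw [hμ] at h5 heq
    exact h5.congr heq
  -- step 6 : the value
  have hinner : ∀ t ∈ Ioi (0:ℝ), ∫ x, F t x ∂μ
      = ∑ j ∈ Finset.range (n+1), (c j * a j * m j) * (t ^ (ν + j) * Real.exp (-t)) := by
    intro t ht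
    have h1 : (fun x => F t x)
        = fun x => (t ^ ν * Real.exp (-t) / t) * (Pn x * q (x / t)) := by
      funext x; simp only [hF]; ring
    rw [h1, integral_const_mul, hμ, cov_eq ht (fun x => Pn x * q (x / t))]
    have h2 : ∀ u : ℝ, Pn (t * u) * q (t * u / t)
        = ∑ j ∈ Finset.range (n+1), (c j * a j * t ^ j) * (u ^ j * q u) := by
      intro u; rw [mul_div_cancel_left₀ _ ht.ne', hPn (t*u), Finset.sum_mul]
      exact Finset.sum_congr rfl fun j _ => by rw [mul_pow]; ring
    simp only [h2]
    rw [integral_finset_sum _ fun j hj => ((hq' j (hrange j hj)).const_mul _)]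
    simp only [integral_const_mul]
    rw [Finset.mul_sum, Finset.mul_sum]
    refine Finset.sum_congr rfl fun j hj => ?_
    rw [hm, pow_add]
    have htne : t ≠ 0 := ht.ne'
    field_simp
  have heq' : (fun x => ∫ t, F t x ∂μ) =ᵐ[μ] fun x => Pn x * Qf x := heq
  have hval1 : ∫ x, Pn x * Qf x ∂μ = ∫ t, (∫ x, F t x ∂μ) ∂μ :=
    (integral_congr_ae heq').symm.trans (integral_integral_swap hHint).symm
  have hval2 : ∫ t, (∫ x, F t x ∂μ) ∂μ
      = ∑ j ∈ Finset.range (n+1), (c j * a j * m j) * (Nat.factorial (ν + j) : ℝ) := by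
    rw [hμ, setIntegral_congr_fun measurableSet_Ioi hinner]
    rw [integral_finset_sum _ fun j _ => ((aux_gamma_int' (ν + j)).const_mul _)]
    exact Finset.sum_congr rfl fun j _ => by rw [integral_const_mul, aux_gamma_val' (ν + j)]
  rw [hval1, hval2]
  exact Finset.sum_congr rfl fun j _ => by rw [hm]; ring

open Polynomial in
/-- The average characteristic polynomial after multiplication by a Ginibre
matrix: `P_n(x) = Σ_j ((n+ν)!/(j+ν)!) a_j x^j` is a monic polynomial of degree
`n` orthogonal to all the transformed dual functions `Q_k`, `k < n`. -/
theorem stmt9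
    (n : ℕ) (hn : 1 ≤ n) (ν : ℕ)
    (q : ℕ → ℝ → ℝ) (hqmeas : ∀ k < n, Measurable (q k))
    (hqint : ∀ k < n, ∀ j ≤ n, IntegrableOn (fun x => x ^ j * |q k x|) (Ioi 0))
    (Q : ℕ → ℝ → ℝ)
    (hQ : ∀ k < n, ∀ y ∈ Ioi (0:ℝ),
      Q k y = ∫ t in Ioi (0:ℝ), t ^ ν * Real.exp (-t) * q k (y / t) / t)
    (a : ℕ → ℝ) (hmonic : a n = 1)
    (pn : ℝ → ℝ)
    (hpn : ∀ x : ℝ, pn x = ∑ j ∈ Finset.range (n + 1), a j * x ^ j)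
    (horth : ∀ k < n, ∫ x in Ioi (0:ℝ), pn x * q k x = 0)
    (Pn : ℝ → ℝ)
    (hPn : ∀ x : ℝ, Pn x = ∑ j ∈ Finset.range (n + 1),
      (Nat.factorial (n + ν) : ℝ) / (Nat.factorial (j + ν) : ℝ) * a j * x ^ j) :
    (∃ P : Polynomial ℝ, P.Monic ∧ P.natDegree = n ∧ ∀ x : ℝ, Pn x = P.eval x) ∧
    ∀ k < n,
      IntegrableOn (fun x => Pn x * Q k x) (Ioi 0) ∧
      ∫ x in Ioi (0:ℝ), Pn x * Q k x = 0 := by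
  set c : ℕ → ℝ := fun j => (Nat.factorial (n + ν) : ℝ) / (Nat.factorial (j + ν) : ℝ) with hc
  constructor
  · -- the polynomial
    set P : Polynomial ℝ := ∑ j ∈ Finset.range (n + 1), C (c j * a j) * X ^ j with hP
    have hcoeff : P.coeff n = 1 := by
      rw [hP, finset_sum_coeff]
      rw [Finset.sum_eq_single n]
      · simp [hc, hmonic, div_self, Nat.cast_ne_zero.mpr (Nat.factorial_ne_zero _)]
      · intro j hj hjn
        rw [coeff_C_mul, coeff_X_pow]; simp [Ne.symm hjn]
      · intro h
        exact absurd (Finset.self_mem_range_succ n) h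
    have hdle : P.natDegree ≤ n := by
      refine Polynomial.natDegree_sum_le_of_forall_le _ _ fun j hj => ?_
      exact le_trans (natDegree_C_mul_le _ _) (by
        simpa using Nat.lt_succ_iff.mp (Finset.mem_range.mp hj))
    have hmon : P.Monic := Polynomial.monic_of_natDegree_le_of_coeff_eq_one n hdle hcoeff
    refine ⟨P, hmon,
      le_antisymm hdle (Polynomial.le_natDegree_of_ne_zero (by rw [hcoeff]; norm_num)), ?_⟩
    intro x
    rw [hPn]
    simp [hP, eval_finset_sum, mul_assoc]
    rfl
  · intro k hk
    have hPn' : ∀ x : ℝ, Pn x = ∑ j ∈ Finset.range (n + 1), c j * a j * x ^ j := hPn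
    obtain ⟨hint, hval⟩ := aux_main n ν (q k) (hqmeas k hk) (hqint k hk) c a Pn hPn'
      (Q k) (hQ k hk)
    refine ⟨hint, ?_⟩
    rw [hval]
    -- each monomial moment is integrable
    have hq' : ∀ j ≤ n, IntegrableOn (fun u : ℝ => u ^ j * q k u) (Ioi 0) := by
      intro j hj
      refine (hqint k hk j hj).mono' ?_ ?_
      · exact ((measurable_id.pow_const j).mul (hqmeas k hk)).aestronglyMeasurable
      · filter_upwards [ae_restrict_mem measurableSet_Ioi] with x hx
        rw [Real.norm_eq_abs, abs_mul, abs_pow, abs_of_pos hx]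
    have hsum : ∑ j ∈ Finset.range (n + 1), a j * ∫ u in Ioi (0:ℝ), u ^ j * q k u = 0 := by
      have h2 : ∀ x : ℝ, pn x * q k x
          = ∑ j ∈ Finset.range (n + 1), a j * (x ^ j * q k x) := by
        intro x; rw [hpn x, Finset.sum_mul]
        exact Finset.sum_congr rfl fun j _ => by ring
      have h3 : ∫ x in Ioi (0:ℝ), pn x * q k x
          = ∑ j ∈ Finset.range (n + 1), a j * ∫ u in Ioi (0:ℝ), u ^ j * q k u := by
        simp only [h2]
        rw [integral_finset_sum _ fun j hj =>
          ((hq' j (Nat.lt_succ_iff.mp (Finset.mem_range.mp hj))).const_mul _)]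
        exact Finset.sum_congr rfl fun j _ => (integral_const_mul _ _)
      rw [← h3]
      exact horth k hk
    calc ∑ j ∈ Finset.range (n + 1),
          c j * a j * (Nat.factorial (ν + j) : ℝ) * ∫ u in Ioi (0:ℝ), u ^ j * q k u
        = ∑ j ∈ Finset.range (n + 1),
          (Nat.factorial (n + ν) : ℝ) * (a j * ∫ u in Ioi (0:ℝ), u ^ j * q k u) := by
          refine Finset.sum_congr rfl fun j _ => ?_
          have e : (Nat.factorial (ν + j) : ℝ) = (Nat.factorial (j + ν) : ℝ) := by
            rw [Nat.add_comm]
          have hne : (Nat.factorial (j + ν) : ℝ) ≠ 0 :=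
            Nat.cast_ne_zero.mpr (Nat.factorial_ne_zero _)
          rw [e, hc]
          field_simp
      _ = (Nat.factorial (n + ν) : ℝ)
          * ∑ j ∈ Finset.range (n + 1), a j * ∫ u in Ioi (0:ℝ), u ^ j * q k u := by
          rw [Finset.mul_sum]
      _ = 0 := by rw [hsum, mul_zero]
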